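/- Let α, β ∈ (−π, π] with sin((α−β)/2) ≠ 0, let M be an n×n non-diagonal Hermitian unitary modularly permutation-symmetric complex matrix with |M_{jj}| = r, |M_{jℓ}| = t > 0 (j ≠ ℓ), d = r/t, and let U = exp(i(α+β)/2)·( cos((α−β)/2)·I + i·sin((α−β)/2)·M ). Then for every real k > 0 and all indices j ≠ ℓ, the ratio ρ(k) = |S(k)_{jj}|² / |S(k)_{jℓ}|² satisfies ρ(k) = d² + (d² + n − 1)·( k·cos(α/2)cos(β/2) + (1/k)·sin(α/2)sin(β/2) )² / sin²((α−β)/2). -/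

import Mathlib

open Matrix Real

private lemma mulkey {n : ℕ} (M : Matrix (Fin n) (Fin n) ℂ) (hM2 : M * M = 1) (a b c e : ℂ) :
    (a • (1 : Matrix (Fin n) (Fin n) ℂ) + b • M) * (c • (1 : Matrix (Fin n) (Fin n) ℂ) + e • M)
      = (a*c + b*e) • (1 : Matrix (Fin n) (Fin n) ℂ) + (a*e + b*c) • M := by
  simp only [add_mul, mul_add, smul_mul_assoc, mul_smul_comm, one_mul, mul_one, hM2, smul_smul]
  module

theorem stmt_15 (n : ℕ) (α β : ℝ)
    (hα : α ∈ Set.Ioc (-π) π) (hβ : β ∈ Set.Ioc (-π) π)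
    (hsin : Real.sin ((α - β) / 2) ≠ 0)
    (M : Matrix (Fin n) (Fin n) ℂ)
    (hM : M.IsHermitian) (hMu : M ∈ Matrix.unitaryGroup (Fin n) ℂ)
    (hnd : ¬ M.IsDiag)
    (r t : ℝ) (ht0 : 0 < t)
    (hr : ∀ j, ‖M j j‖ = r)
    (ht : ∀ j l, j ≠ l → ‖M j l‖ = t)
    (d : ℝ) (hd : d = r / t)
    (U : Matrix (Fin n) (Fin n) ℂ)
    (hU : U = Complex.exp (Complex.I * ((α + β) / 2)) •
        ((Real.cos ((α - β) / 2) : ℂ) • (1 : Matrix (Fin n) (Fin n) ℂ) +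
          (Complex.I * (Real.sin ((α - β) / 2) : ℂ)) • M)) :
    ∀ k : ℝ, 0 < k → ∀ j l : Fin n, j ≠ l →
      ‖(((((k : ℂ) - 1) • U + ((k : ℂ) + 1) • (1 : Matrix (Fin n) (Fin n) ℂ))⁻¹ *
            (((k : ℂ) + 1) • U + ((k : ℂ) - 1) • (1 : Matrix (Fin n) (Fin n) ℂ))) j j)‖ ^ 2 /
          ‖(((((k : ℂ) - 1) • U + ((k : ℂ) + 1) • (1 : Matrix (Fin n) (Fin n) ℂ))⁻¹ *
            (((k : ℂ) + 1) • U + ((k : ℂ) - 1) • (1 : Matrix (Fin n) (Fin n) ℂ))) j l)‖ ^ 2 =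
        d ^ 2 + (d ^ 2 + n - 1) *
          (k * Real.cos (α / 2) * Real.cos (β / 2)
            + (1 / k) * Real.sin (α / 2) * Real.sin (β / 2)) ^ 2 /
          Real.sin ((α - β) / 2) ^ 2 := by
  intro k hk j l hjl
  have hn : 0 < n := j.pos
  -- M * M = 1
  have hM2 : M * M = 1 := by
    have h := (Matrix.mem_unitaryGroup_iff').mp hMu
    rwa [Matrix.star_eq_conjTranspose, hM.eq] at h
  -- diagonal entry is real
  set m : ℝ := Complex.re (M j j) with hmdef
  have hm : (m : ℂ) = M j j := hM.coe_re_apply_self j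
  have hmr : m ^ 2 = r ^ 2 := by
    have h1 : |m| = r := by
      have := hr j
      rw [← hm, Complex.norm_real, Real.norm_eq_abs] at this
      exact this
    rw [← h1, sq_abs]
  -- column norm identity
  have hnorm : r ^ 2 + ((n : ℝ) - 1) * t ^ 2 = 1 := by
    have h := (Matrix.mem_unitaryGroup_iff').mp hMu
    have h2 := congrFun (congrFun h j) j
    rw [Matrix.mul_apply, Matrix.one_apply_eq] at h2
    have h3 : ∀ x, (star M) j x * M x j = ((‖M x j‖ ^ 2 : ℝ) : ℂ) := by
      intro x
      rw [Matrix.star_apply, Complex.sq_norm, Complex.normSq_eq_conj_mul_self]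
      rfl
    rw [Finset.sum_congr rfl (fun x _ => h3 x)] at h2
    rw [← Complex.ofReal_sum] at h2
    have h4 : ∑ x, ‖M x j‖ ^ 2 = (1 : ℝ) := by exact_mod_cast h2
    rw [← Finset.add_sum_erase _ _ (Finset.mem_univ j)] at h4
    have h5 : ∑ x ∈ Finset.univ.erase j, ‖M x j‖ ^ 2
        = ((n : ℝ) - 1) * t ^ 2 := by
      rw [Finset.sum_congr rfl (fun x hx => by
        rw [ht x j (Finset.ne_of_mem_erase hx)])]
      rw [Finset.sum_const, Finset.card_erase_of_mem (Finset.mem_univ j),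
        Finset.card_univ, Fintype.card_fin, nsmul_eq_mul]
      rw [Nat.cast_sub hn]
      norm_num
    rw [hr j, h5] at h4
    linarith
  -- scalar abbreviations
  set cθ : ℝ := Real.cos ((α - β)/2) with hcθ
  set sθ : ℝ := Real.sin ((α - β)/2) with hsθ
  set cγ : ℝ := Real.cos ((α + β)/2) with hcγ
  set sγ : ℝ := Real.sin ((α + β)/2) with hsγ
  set eγ : ℂ := Complex.exp (Complex.I * ((α + β) / 2)) with heγdef
  have heγ : eγ = (cγ : ℂ) + (sγ : ℂ) * Complex.I := by
    rw [heγdef, show (Complex.I * ((α + β) / 2) : ℂ) = (((α+β)/2 : ℝ) : ℂ) * Complex.I by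
      push_cast; ring, Complex.exp_mul_I, hcγ, hsγ]
    push_cast [Complex.ofReal_cos, Complex.ofReal_sin]
    norm_cast
  have habseγ : ‖eγ‖ = 1 := by
    rw [heγdef, show (Complex.I * ((α + β) / 2) : ℂ) = (((α+β)/2 : ℝ) : ℂ) * Complex.I by
      push_cast; ring]
    exact Complex.norm_exp_ofReal_mul_I _
  set a₁ : ℂ := ((k:ℂ) - 1) * (eγ * (cθ:ℂ)) + ((k:ℂ) + 1) with ha₁
  set b₁ : ℂ := ((k:ℂ) - 1) * (eγ * Complex.I * (sθ:ℂ)) with hb₁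
  set a₂ : ℂ := ((k:ℂ) + 1) * (eγ * (cθ:ℂ)) + ((k:ℂ) - 1) with ha₂
  set b₂ : ℂ := ((k:ℂ) + 1) * (eγ * Complex.I * (sθ:ℂ)) with hb₂
  set D : ℂ := a₁^2 - b₁^2 with hD
  -- nonvanishing of D
  have hfac : ∀ z : ℂ, ‖z‖ = 1 → ((k:ℂ) - 1) * z + ((k:ℂ) + 1) ≠ 0 := by
    intro z hz h
    have h2 : ((k:ℂ) - 1) * z = -(((k:ℂ)) + 1) := by linear_combination h
    have h3 := congrArg (‖·‖) h2
    rw [norm_mul, hz, mul_one, norm_neg] at h3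
    have h4 : ((k:ℂ) - 1) = ((k - 1 : ℝ) : ℂ) := by push_cast; ring
    have h5 : ((k:ℂ) + 1) = ((k + 1 : ℝ) : ℂ) := by push_cast; ring
    rw [h4, h5, Complex.norm_real, Complex.norm_real, Real.norm_eq_abs, Real.norm_eq_abs] at h3
    have h6 : |k + 1| = k + 1 := abs_of_pos (by linarith)
    rw [h6] at h3
    nlinarith [sq_abs (k - 1), abs_nonneg (k-1)]
  have hcθsθ : (cθ:ℝ)^2 + sθ^2 = 1 := by rw [hcθ, hsθ]; exact Real.cos_sq_add_sin_sq _
  have hDne : D ≠ 0 := by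
    have hfac1 : ‖eγ * ((cθ:ℂ) + (sθ:ℂ) * Complex.I)‖ = 1 := by
      rw [norm_mul, habseγ, one_mul]
      have : ((cθ:ℂ) + (sθ:ℂ) * Complex.I) = Complex.cos ((α-β)/2 : ℝ) + Complex.sin ((α-β)/2 : ℝ) * Complex.I := by
        rw [← Complex.ofReal_cos, ← Complex.ofReal_sin, hcθ, hsθ]
      rw [this]
      exact Complex.norm_cos_add_sin_mul_I _
    have hfac2 : ‖eγ * ((cθ:ℂ) - (sθ:ℂ) * Complex.I)‖ = 1 := by
      rw [norm_mul, habseγ, one_mul]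
      have : ((cθ:ℂ) - (sθ:ℂ) * Complex.I)
          = Complex.cos ((-((α-β)/2) : ℝ)) + Complex.sin ((-((α-β)/2) : ℝ)) * Complex.I := by
        rw [← Complex.ofReal_cos, ← Complex.ofReal_sin]
        push_cast [Real.cos_neg, Real.sin_neg, hcθ, hsθ]
        ring
      rw [this]
      exact Complex.norm_cos_add_sin_mul_I _
    have hDfac : D = (((k:ℂ) - 1) * (eγ * ((cθ:ℂ) + (sθ:ℂ) * Complex.I)) + ((k:ℂ) + 1))
        * (((k:ℂ) - 1) * (eγ * ((cθ:ℂ) - (sθ:ℂ) * Complex.I)) + ((k:ℂ) + 1)) := by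
      rw [hD, ha₁, hb₁]; ring
    rw [hDfac]
    exact mul_ne_zero (hfac _ hfac1) (hfac _ hfac2)
  -- matrix computations
  have hA : (((k : ℂ) - 1) • U + ((k : ℂ) + 1) • (1 : Matrix (Fin n) (Fin n) ℂ))
      = a₁ • (1 : Matrix (Fin n) (Fin n) ℂ) + b₁ • M := by
    rw [hU]
    module
  have hB : (((k : ℂ) + 1) • U + ((k : ℂ) - 1) • (1 : Matrix (Fin n) (Fin n) ℂ))
      = a₂ • (1 : Matrix (Fin n) (Fin n) ℂ) + b₂ • M := by
    rw [hU]
    module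
  have hAinv : (((k : ℂ) - 1) • U + ((k : ℂ) + 1) • (1 : Matrix (Fin n) (Fin n) ℂ))⁻¹
      = (a₁/D) • (1 : Matrix (Fin n) (Fin n) ℂ) + (-b₁/D) • M := by
    apply Matrix.inv_eq_right_inv
    rw [hA, mulkey M hM2]
    have e1 : a₁ * (a₁/D) + b₁ * (-b₁/D) = 1 := by
      have h' : a₁^2 - b₁^2 ≠ 0 := hDne
      rw [hD]; field_simp; ring
    have e2 : a₁ * (-b₁/D) + b₁ * (a₁/D) = 0 := by ring
    rw [e1, e2]
    simp
  set c₁ : ℂ := (a₁/D) * a₂ + (-b₁/D) * b₂ with hc₁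
  set c₂ : ℂ := (a₁/D) * b₂ + (-b₁/D) * a₂ with hc₂
  have hS : (((k : ℂ) - 1) • U + ((k : ℂ) + 1) • (1 : Matrix (Fin n) (Fin n) ℂ))⁻¹ *
      (((k : ℂ) + 1) • U + ((k : ℂ) - 1) • (1 : Matrix (Fin n) (Fin n) ℂ))
      = c₁ • (1 : Matrix (Fin n) (Fin n) ℂ) + c₂ • M := by
    rw [hAinv, hB, mulkey M hM2]
  rw [hS]
  simp only [Matrix.add_apply, Matrix.smul_apply, Matrix.one_apply_eq,
    Matrix.one_apply_ne hjl, smul_eq_mul, mul_one, mul_zero, zero_add]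
  -- key scalar expressions
  set R : ℝ := 2*(k^2 - 1)*cγ + 2*(k^2 + 1)*cθ with hR
  set I₀ : ℝ := 4*k*sθ*m with hI₀
  have hcγsγ : ((cγ:ℂ))^2 + ((sγ:ℂ))^2 = 1 := by exact_mod_cast Real.cos_sq_add_sin_sq ((α+β)/2)
  have hcθsθ' : ((cθ:ℂ))^2 + ((sθ:ℂ))^2 = 1 := by exact_mod_cast hcθsθ
  have hnum : c₁ + c₂ * M j j = eγ * ((R:ℂ) + (I₀:ℂ) * Complex.I) / D := by
    rw [← hm]
    have step : c₁ + c₂ * (m:ℂ) = (a₁*a₂ - b₁*b₂ + (a₁*b₂ - b₁*a₂)*(m:ℂ))/D := by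
      rw [hc₁, hc₂]; ring
    rw [step]
    congr 1
    rw [ha₁, hb₁, ha₂, hb₂, heγ, hR, hI₀]
    push_cast
    linear_combination (((k:ℂ)^2 - 1)*((cγ:ℂ) + (sγ:ℂ)*Complex.I)^2) * hcθsθ'
      + (((k:ℂ)^2 - 1)*((sγ:ℂ)^2 - ((cγ:ℂ) + (sγ:ℂ)*Complex.I)^2*(sθ:ℂ)^2)) * Complex.I_sq
      - ((k:ℂ)^2 - 1) * hcγsγ
  have hoff : c₂ = 4*(k:ℂ)*(eγ * Complex.I * (sθ:ℂ))/D := by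
    rw [hc₂, ha₁, hb₁, ha₂, hb₂]; ring
  rw [hnum, hoff]
  -- compute absolute values
  have habsnum : ‖eγ * ((R:ℂ) + (I₀:ℂ) * Complex.I) / D‖
      = ‖(R:ℂ) + (I₀:ℂ) * Complex.I‖ / ‖D‖ := by
    rw [norm_div, norm_mul, habseγ, one_mul]
  have habsoff : ‖4*(k:ℂ)*(eγ * Complex.I * (sθ:ℂ))/D * M j l‖
      = (4 * k * |sθ| * t) / ‖D‖ := by
    simp only [norm_div, norm_mul, Complex.norm_I, Complex.norm_real, Real.norm_eq_abs, habseγ,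
      Complex.norm_ofNat, ht j l hjl]
    rw [abs_of_pos hk]
    ring
  rw [habsnum, habsoff]
  have hADpos : 0 < ‖D‖ := norm_pos_iff.mpr hDne
  have hden : (0:ℝ) < 4 * k * |sθ| * t := by
    have : 0 < |sθ| := abs_pos.mpr hsin
    positivity
  have hcancel : (‖(R:ℂ) + (I₀:ℂ) * Complex.I‖ / ‖D‖)^2
      / ((4 * k * |sθ| * t) / ‖D‖)^2
      = (‖(R:ℂ) + (I₀:ℂ) * Complex.I‖)^2 / (4 * k * |sθ| * t)^2 := by
    rw [div_pow, div_pow, div_div_div_cancel_right₀]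
    positivity
  rw [hcancel, Complex.sq_norm, Complex.normSq_add_mul_I]
  -- final real identity
  have hsθabs : |sθ|^2 = sθ^2 := sq_abs _
  have hcγexp : cγ = Real.cos (α/2) * Real.cos (β/2) - Real.sin (α/2) * Real.sin (β/2) := by
    rw [hcγ, show (α+β)/2 = α/2 + β/2 by ring, Real.cos_add]
  have hcθexp : cθ = Real.cos (α/2) * Real.cos (β/2) + Real.sin (α/2) * Real.sin (β/2) := by
    rw [hcθ, show (α-β)/2 = α/2 - β/2 by ring, Real.cos_sub]
  have hkne : k ≠ 0 := ne_of_gt hk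
  have htne : t ≠ 0 := ne_of_gt ht0
  rw [hR, hI₀, hcγexp, hcθexp, hd]
  have hRrw : (4 * k * |sθ| * t)^2 = 16*k^2*sθ^2*t^2 := by
    rw [← hsθabs]; ring
  rw [hRrw]
  field_simp
  linear_combination (16*k^2*sθ^2) * hmr
    - (16*(k * Real.cos (α/2) * Real.cos (β/2) * k + Real.sin (α/2) * Real.sin (β/2))^2) * hnorm
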